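/- Let E₁₂, E₂₃, E₃₁ be a compatible triplet of essential matrices (Eᵢⱼ = Rᵢ [bᵢ − bⱼ]× Rⱼᵀ with Rᵢ ∈ SO(3), bᵢ ∈ ℝ³). Then for all distinct i, j, k ∈ {1,2,3}: Eᵢⱼᵀ Eᵢⱼ Eⱼₖ − (1/2)tr(Eᵢⱼᵀ Eᵢⱼ)·Eⱼₖ + Eᵢⱼ* Eₖᵢᵀ = 0, where Eⱼᵢ = Eᵢⱼᵀ and * denotes the adjugate. -/
import Mathlib


open Matrix

/-- The cross-product matrix of a vector `a ∈ ℝ³`. -/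
def skew (a : Fin 3 → ℝ) : Matrix (Fin 3) (Fin 3) ℝ :=
  !![0, -a 2, a 1; a 2, 0, -a 0; -a 1, a 0, 0]

lemma adj_orth (A : Matrix (Fin 3) (Fin 3) ℝ) (h : A * Aᵀ = 1) (hd : A.det = 1) :
    A.adjugate = Aᵀ := by
  have h2 : A * A.adjugate = 1 := by rw [Matrix.mul_adjugate, hd, one_smul]
  calc A.adjugate = A.adjugate * (A * Aᵀ) := by rw [h, mul_one]
    _ = (A.adjugate * A) * Aᵀ := by rw [mul_assoc]
    _ = Aᵀ := by rw [mul_eq_one_comm.mp h2, one_mul]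

lemma skew_transpose (a : Fin 3 → ℝ) :
    (skew a)ᵀ = !![0, a 2, -a 1; -a 2, 0, a 0; a 1, -a 0, 0] := by
  rw [skew]
  ext i j
  fin_cases i <;> fin_cases j <;> simp

lemma key (u v : Fin 3 → ℝ) :
    (skew u)ᵀ * skew u * skew v
      - ((1 : ℝ) / 2 * Matrix.trace ((skew u)ᵀ * skew u)) • skew v
      + (skew u).adjugate * (skew (-u - v))ᵀ = 0 := by
  have ha : (skew u).adjugate =
      !![u 0 * u 0, u 0 * u 1, u 0 * u 2;
         u 1 * u 0, u 1 * u 1, u 1 * u 2;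
         u 2 * u 0, u 2 * u 1, u 2 * u 2] := by
    rw [skew, Matrix.adjugate_fin_three_of]
    ext a c
    fin_cases a <;> fin_cases c <;> simp <;> ring
  have ht : Matrix.trace ((skew u)ᵀ * skew u)
      = 2 * (u 0 * u 0 + u 1 * u 1 + u 2 * u 2) := by
    rw [skew_transpose, skew, Matrix.mul_fin_three]
    simp [Matrix.trace, Matrix.diag, Fin.sum_univ_three]
    ring
  rw [ht, ha, skew_transpose (-u - v), skew_transpose u]
  simp only [skew]
  rw [Matrix.mul_fin_three, Matrix.mul_fin_three, Matrix.mul_fin_three, Matrix.smul_of]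
  ext a c
  fin_cases a <;> fin_cases c <;> simp [Pi.sub_apply, Pi.neg_apply] <;> ring

/-- For a compatible triplet of essential matrices `Eᵢⱼ = Rᵢ [bᵢ − bⱼ]× Rⱼᵀ` and all
distinct `i, j, k`: `Eᵢⱼᵀ Eᵢⱼ Eⱼₖ − (1/2)tr(Eᵢⱼᵀ Eᵢⱼ)·Eⱼₖ + Eᵢⱼ* Eₖᵢᵀ = 0`. -/
theorem compatible_triplet_cubic_constraints
    (R : Fin 3 → Matrix (Fin 3) (Fin 3) ℝ) (b : Fin 3 → Fin 3 → ℝ)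
    (hR : ∀ i, R i * (R i)ᵀ = 1) (hRdet : ∀ i, (R i).det = 1)
    (E : Fin 3 → Fin 3 → Matrix (Fin 3) (Fin 3) ℝ)
    (hE : ∀ i j, E i j = R i * skew (b i - b j) * (R j)ᵀ) :
    ∀ i j k : Fin 3, i ≠ j → j ≠ k → k ≠ i →
      (E i j)ᵀ * E i j * E j k
        - ((1 : ℝ) / 2 * Matrix.trace ((E i j)ᵀ * E i j)) • E j k
        + (E i j).adjugate * (E k i)ᵀ = 0 := by
  intro i j k _ _ _
  have hRt : ∀ i, (R i)ᵀ * R i = 1 := fun i => mul_eq_one_comm.mp (hR i)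
  have ci : ∀ X, (R i)ᵀ * (R i * X) = X := fun X => by
    rw [← mul_assoc, hRt i, one_mul]
  set u := b i - b j with hu
  set v := b j - b k with hv
  have harg : b k - b i = -u - v := by rw [hu, hv]; abel
  rw [hE i j, hE j k, hE k i, harg]
  have e1 : (R i * skew u * (R j)ᵀ)ᵀ * (R i * skew u * (R j)ᵀ) * (R j * skew v * (R k)ᵀ)
      = R j * ((skew u)ᵀ * skew u * skew v) * (R k)ᵀ := by
    simp only [Matrix.transpose_mul, Matrix.transpose_transpose, Matrix.mul_assoc, ci]
    rw [← Matrix.mul_assoc ((R j)ᵀ) (R j), hRt j, one_mul]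
  have e2 : Matrix.trace ((R i * skew u * (R j)ᵀ)ᵀ * (R i * skew u * (R j)ᵀ))
      = Matrix.trace ((skew u)ᵀ * skew u) := by
    simp only [Matrix.transpose_mul, Matrix.transpose_transpose, Matrix.mul_assoc, ci]
    rw [← Matrix.mul_assoc, ← Matrix.mul_assoc, Matrix.trace_mul_cycle,
      ← Matrix.mul_assoc, hRt j, one_mul]
  have e3 : (R i * skew u * (R j)ᵀ).adjugate * (R k * skew (-u - v) * (R i)ᵀ)ᵀ
      = R j * ((skew u).adjugate * (skew (-u - v))ᵀ) * (R k)ᵀ := by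
    rw [Matrix.adjugate_mul_distrib, Matrix.adjugate_mul_distrib,
      adj_orth (R i) (hR i) (hRdet i),
      adj_orth ((R j)ᵀ) (by rw [Matrix.transpose_transpose]; exact hRt j)
        (by rw [Matrix.det_transpose]; exact hRdet j)]
    simp only [Matrix.transpose_mul, Matrix.transpose_transpose, Matrix.mul_assoc, ci]
  rw [e1, e2, e3]
  have : R j * ((skew u)ᵀ * skew u * skew v) * (R k)ᵀ
      - ((1 : ℝ) / 2 * Matrix.trace ((skew u)ᵀ * skew u)) •
        (R j * skew v * (R k)ᵀ)
      + R j * ((skew u).adjugate * (skew (-u - v))ᵀ) * (R k)ᵀ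
      = R j * ((skew u)ᵀ * skew u * skew v
          - ((1 : ℝ) / 2 * Matrix.trace ((skew u)ᵀ * skew u)) • skew v
          + (skew u).adjugate * (skew (-u - v))ᵀ) * (R k)ᵀ := by
    simp only [Matrix.mul_add, Matrix.add_mul, Matrix.mul_sub, Matrix.sub_mul,
      Matrix.mul_smul, Matrix.smul_mul]
  rw [this, key, Matrix.mul_zero, Matrix.zero_mul]
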